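/- If at DMPC iteration j-1 there exists a complete feasible trajectory from x_S to x_F, then by induction on time steps, at iteration j the DMPC optimization is feasible at every time step t ≥ 0: at each step, the shifted trajectory obtained by appending one step of the iteration-(j-1) trajectory to the tail of the time-(t-1) solution is a feasible candidate. -/
import Mathlib


/-- A state `x` is DMPC-feasible (w.r.t. the previous-iteration trajectory `xp, up`): there
is an admissible `N`-step trajectory from `x` landing on a state `xp τ` of the previous
trajectory, after which the previous trajectory may be followed. -/
def DMPCFeasible {X U : Type*} (f : X → U → X) (Xset : Set X) (Uset : Set U)
    (xp : ℕ → X) (N : ℕ) (x : X) : Prop :=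
  ∃ (y : ℕ → X) (v : ℕ → U) (τ : ℕ),
    y 0 = x ∧
    (∀ k, k < N → y (k + 1) = f (y k) (v k)) ∧
    (∀ k, k ≤ N → y k ∈ Xset) ∧
    (∀ k, k < N → v k ∈ Uset) ∧
    y N = xp τ

/-- Recursive feasibility of DMPC: given a complete feasible trajectory `(xp, up)` from
`xS` to the equilibrium `xF` at iteration `j - 1`, the initial state `xS` is feasible at
iteration `j`, and feasibility propagates from each time step to the next (via the shifted
trajectory appending one more step of the iteration-(j-1) trajectory); hence by induction
the DMPC problem is feasible at every time step. -/
theorem dmpc_recursive_feasibility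
    {X U : Type*} (f : X → U → X) (Xset : Set X) (Uset : Set U)
    (xF : X) (z0 : U) (hz0 : z0 ∈ Uset) (heq : f xF z0 = xF) (hxF : xF ∈ Xset)
    (xp : ℕ → X) (up : ℕ → U) (xS : X)
    (hp0 : xp 0 = xS)
    (hpdyn : ∀ k, xp (k + 1) = f (xp k) (up k))
    (hpX : ∀ k, xp k ∈ Xset) (hpU : ∀ k, up k ∈ Uset)
    (hpF : ∃ T, ∀ k ≥ T, xp k = xF)
    (N : ℕ) (hN : 1 ≤ N) :
    DMPCFeasible f Xset Uset xp N xS ∧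
    (∀ x : X, DMPCFeasible f Xset Uset xp N x →
      ∃ u ∈ Uset, f x u ∈ Xset ∧ DMPCFeasible f Xset Uset xp N (f x u)) := by
  constructor
  · exact ⟨xp, up, N, hp0, fun k _ => hpdyn k, fun k _ => hpX k,
      fun k _ => hpU k, rfl⟩
  · rintro x ⟨y, v, τ, hy0, hdyn, hX, hU, hyN⟩
    refine ⟨v 0, hU 0 (by omega), ?_, ?_⟩
    · have h1 : f x (v 0) = y 1 := by rw [← hy0, ← hdyn 0 (by omega)]
      rw [h1]; exact hX 1 hN
    · refine ⟨fun k => if k < N then y (k + 1) else xp (τ + 1),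
        fun k => if k + 1 < N then v (k + 1) else up τ, τ + 1, ?_, ?_, ?_, ?_, ?_⟩
      · simp only [if_pos (by omega : 0 < N)]
        rw [hdyn 0 (by omega), hy0]
      · intro k hk
        by_cases h : k + 1 < N
        · simp only [if_pos hk, if_pos h, if_pos (by omega : k + 1 < N)]
          exact hdyn (k + 1) h
        · have hkN : k + 1 = N := by omega
          simp only [if_pos hk, if_neg h, if_neg (by omega : ¬ k + 1 < N)]
          rw [hkN, hyN]; exact hpdyn τ
      · intro k hk
        by_cases h : k < N
        · simp only [if_pos h]; exact hX (k + 1) (by omega)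
        · simp only [if_neg h]; exact hpX _
      · intro k hk
        by_cases h : k + 1 < N
        · simp only [if_pos h]; exact hU _ h
        · simp only [if_neg h]; exact hpU τ
      · simp only [if_neg (lt_irrefl N)]
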